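/- arXiv:1301.5684 — 2 statements merged into one kernel-verified Lean document; each statement's English description precedes it below -/
import Mathlib

section
/- Let m_1^l, m_2^l, m̂^l ∈ F_q^l with m̂^l ≠ m_1^l + m_2^l, where l ≥ 1 and n ≥ 1. Let G_{O/I} ∈ F_q^{l×n} and B_1^n, B_2^n ∈ F_q^n be mutually independent and uniformly distributed, and set B^n := B_1^n + B_2^n. Then for any vectors v_1^n, v_2^n, v^n ∈ F_q^n, P(m_1^l G_{O/I} + B_1^n = v_1^n, m_2^l G_{O/I} + B_2^n = v_2^n, m̂^l G_{O/I} + B^n = v^n) = q^{-3n}. -/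
open Matrix

open Finset

-- surjectivity of G ↦ c ᵥ* G when c ≠ 0
lemma vecMul_surj {F : Type*} [Field F] [DecidableEq F] {l n : ℕ}
    (c : Fin l → F) (hc : c ≠ 0) (w : Fin n → F) :
    ∃ G : Matrix (Fin l) (Fin n) F, c ᵥ* G = w := by
  obtain ⟨i, hi⟩ : ∃ i, c i ≠ 0 := by
    by_contra h; push_neg at h; exact hc (funext h)
  refine ⟨fun j k => if j = i then (c i)⁻¹ * w k else 0, funext fun k => ?_⟩
  simp only [vecMul, dotProduct]
  rw [Finset.sum_eq_single i]
  · simp [mul_assoc, inv_mul_cancel₀ hi, ← mul_assoc, mul_inv_cancel₀ hi]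
  · intro b _ hb; simp [hb]
  · simp

lemma fiber_card_eq {F : Type*} [Field F] [Fintype F] [DecidableEq F] {l n : ℕ}
    (c : Fin l → F) (hc : c ≠ 0) (w₁ w₂ : Fin n → F) :
    (univ.filter fun G : Matrix (Fin l) (Fin n) F => c ᵥ* G = w₁).card =
    (univ.filter fun G : Matrix (Fin l) (Fin n) F => c ᵥ* G = w₂).card := by
  obtain ⟨g, hg⟩ := vecMul_surj c hc (w₂ - w₁)
  refine Finset.card_nbij' (fun G => G + g) (fun G => G - g) ?_ ?_ ?_ ?_
  · intro G hG; simp only [mem_coe, mem_filter, mem_univ, true_and] at *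
    rw [vecMul_add, hG, hg]; abel
  · intro G hG; simp only [mem_coe, mem_filter, mem_univ, true_and] at *
    rw [vecMul_sub, hG, hg]; abel
  · intro G _; simp
  · intro G _; simp

lemma fiber_card {F : Type*} [Field F] [Fintype F] [DecidableEq F] {l n : ℕ}
    (c : Fin l → F) (hc : c ≠ 0) (w : Fin n → F) :
    (univ.filter fun G : Matrix (Fin l) (Fin n) F => c ᵥ* G = w).card
      * Fintype.card F ^ n = Fintype.card F ^ (l * n) := by
  have h := Finset.card_eq_sum_card_fiberwise
    (f := fun G : Matrix (Fin l) (Fin n) F => c ᵥ* G) (s := univ) (t := univ)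
    (fun _ _ => mem_univ _)
  rw [Finset.card_univ] at h
  have : Fintype.card (Matrix (Fin l) (Fin n) F) = Fintype.card F ^ (l * n) := by
    simp only [show (Matrix (Fin l) (Fin n) F) = (Fin l → Fin n → F) from rfl, Fintype.card_fun, Fintype.card_fin]; rw [← pow_mul, mul_comm]
  rw [this] at h
  rw [h]
  have : ∀ w' ∈ (univ : Finset (Fin n → F)),
      (univ.filter fun G : Matrix (Fin l) (Fin n) F => c ᵥ* G = w').card
      = (univ.filter fun G : Matrix (Fin l) (Fin n) F => c ᵥ* G = w).card :=
    fun w' _ => fiber_card_eq c hc w' w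
  rw [Finset.sum_congr rfl this, Finset.sum_const, Finset.card_univ, smul_eq_mul]
  rw [Fintype.card_fun, Fintype.card_fin, mul_comm]

/-- Lemma 2(c).  With `G_{O/I}, B₁, B₂` mutually independent uniform,
`B = B₁ + B₂`, and `m̂ ≠ m₁ + m₂`, the three codewords
`m₁ G_{O/I} + B₁`, `m₂ G_{O/I} + B₂`, `m̂ G_{O/I} + B` are jointly uniform:
each triple of values has probability `q^{-3n}`. -/
theorem stmt_3 {F : Type*} [Field F] [Fintype F] [DecidableEq F] {l n : ℕ}
    (hl : 1 ≤ l) (hn : 1 ≤ n)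
    (m1 m2 mh : Fin l → F) (hne : mh ≠ m1 + m2)
    (v1 v2 v : Fin n → F) :
    ((Finset.univ.filter
        (fun ω : Matrix (Fin l) (Fin n) F × (Fin n → F) × (Fin n → F) =>
          m1 ᵥ* ω.1 + ω.2.1 = v1 ∧
          m2 ᵥ* ω.1 + ω.2.2 = v2 ∧
          mh ᵥ* ω.1 + (ω.2.1 + ω.2.2) = v)).card : ℚ)
      / (Fintype.card
          (Matrix (Fin l) (Fin n) F × (Fin n → F) × (Fin n → F)) : ℚ)
      = 1 / (Fintype.card F : ℚ) ^ (3 * n) := by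
  classical
  set c : Fin l → F := mh - (m1 + m2) with hcdef
  have hc : c ≠ 0 := sub_ne_zero.mpr hne
  set w : Fin n → F := v - v1 - v2 with hwdef
  have hcard := fiber_card c hc w
  have hbij : (Finset.univ.filter
        (fun ω : Matrix (Fin l) (Fin n) F × (Fin n → F) × (Fin n → F) =>
          m1 ᵥ* ω.1 + ω.2.1 = v1 ∧
          m2 ᵥ* ω.1 + ω.2.2 = v2 ∧
          mh ᵥ* ω.1 + (ω.2.1 + ω.2.2) = v)).card
      = (univ.filter fun G : Matrix (Fin l) (Fin n) F => c ᵥ* G = w).card := by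
    refine Finset.card_nbij' (fun ω => ω.1)
      (fun G => (G, (v1 - m1 ᵥ* G, v2 - m2 ᵥ* G))) ?_ ?_ ?_ ?_
    · rintro ⟨G, B1, B2⟩ h
      simp only [mem_coe, mem_filter, mem_univ, true_and] at *
      obtain ⟨h1, h2, h3⟩ := h
      show (mh - (m1 + m2)) ᵥ* G = v - v1 - v2
      rw [sub_vecMul, add_vecMul, ← h1, ← h2, ← h3]
      abel
    · intro G hG
      simp only [mem_coe, mem_filter, mem_univ, true_and] at *
      have hG' : (mh - (m1 + m2)) ᵥ* G = v - v1 - v2 := hG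
      rw [sub_vecMul, add_vecMul] at hG'
      refine ⟨by abel, by abel, ?_⟩
      linear_combination hG'
    · rintro ⟨G, B1, B2⟩ h
      simp only [mem_coe, mem_filter, mem_univ, true_and] at h
      obtain ⟨h1, h2, h3⟩ := h
      exact Prod.ext rfl (Prod.ext (eq_sub_of_add_eq' h1).symm (eq_sub_of_add_eq' h2).symm)
    · intro G _; rfl
  have hT : (Fintype.card (Matrix (Fin l) (Fin n) F × (Fin n → F) × (Fin n → F)))
      = Fintype.card F ^ (l * n) * (Fintype.card F ^ n * Fintype.card F ^ n) := by
    simp only [Fintype.card_prod,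
      show (Matrix (Fin l) (Fin n) F) = (Fin l → Fin n → F) from rfl,
      Fintype.card_fun, Fintype.card_fin]
    rw [← pow_mul, mul_comm n l]
  have hq : (0:ℚ) < (Fintype.card F : ℚ) := by exact_mod_cast Fintype.card_pos
  rw [hbij, hT]
  have hcast : ((univ.filter fun G : Matrix (Fin l) (Fin n) F => c ᵥ* G = w).card : ℚ)
      * (Fintype.card F : ℚ) ^ n = (Fintype.card F : ℚ) ^ (l * n) := by
    exact_mod_cast congrArg (Nat.cast : ℕ → ℚ) hcard
  push_cast
  rw [div_eq_div_iff (by positivity) (by positivity),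
    show 3 * n = n + (n + n) by ring, pow_add, pow_add]
  linear_combination ((Fintype.card F : ℚ) ^ n * (Fintype.card F : ℚ) ^ n) * hcast
end

section
/- Let G_I ∈ F_q^{k×n}, G_{O/I} ∈ F_q^{l×n}, B_1^n, B_2^n ∈ F_q^n be mutually independent and uniformly distributed. Define V_j^n(a^k, m^l) := a^k G_I + m^l G_{O/I} + B_j^n and the coset C_j(m^l) := (V_j^n(a^k, m^l) : a^k ∈ F_q^k), and let V^n(a^k, m^l) := a^k G_I + m^l G_{O/I} + B_1^n + B_2^n. Then for any m_1^l, m_2^l ∈ F_q^l and any â^k ∈ F_q^k, m̂^l ∈ F_q^l with m̂^l ≠ m_1^l + m_2^l, the pair of random tuples (C_1(m_1^l), C_2(m_2^l)) is statistically independent of the random vector V^n(â^k, m̂^l). -/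
open Matrix MeasureTheory ProbabilityTheory
open scoped ENNReal

namespace Stmt5

variable {F : Type} [Field F] [Fintype F] [DecidableEq F] {k l n : ℕ}

/-- Sample space: generator matrices `G_I`, `G_{O/I}` and the two bias vectors. -/
abbrev Ω (F : Type) [Fintype F] (k l n : ℕ) : Type :=
  Matrix (Fin k) (Fin n) F × Matrix (Fin l) (Fin n) F × (Fin n → F) × (Fin n → F)

instance : MeasurableSpace (Ω F k l n) := ⊤
instance : MeasurableSpace (Fin n → F) := ⊤
instance : MeasurableSpace ((Fin k → F) → (Fin n → F)) := ⊤

/-- Uniform probability measure: `G_I, G_{O/I}, B₁, B₂` mutually independent and uniform. -/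
noncomputable def μunif (F : Type) [Field F] [Fintype F] (k l n : ℕ) :
    Measure (Ω F k l n) :=
  (PMF.uniformOfFintype (Ω F k l n)).toMeasure

set_option linter.unusedSectionVars false

/-- matrix with row `i` equal to `w`, other rows zero -/
def rowMat (i : Fin l) (w : Fin n → F) : Matrix (Fin l) (Fin n) F :=
  Matrix.of fun r j => if r = i then w j else 0

lemma vecMul_rowMat (m : Fin l → F) (i : Fin l) (w : Fin n → F) :
    m ᵥ* rowMat i w = m i • w := by
  funext j
  simp [rowMat, Matrix.vecMul, dotProduct, mul_ite, Finset.sum_ite_eq']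

/-- The auxiliary "parameter" space. -/
abbrev P (F : Type) [Fintype F] (k l n : ℕ) : Type :=
  Matrix (Fin k) (Fin n) F × Matrix (Fin l) (Fin n) F × (Fin n → F)

/-- the key change of variables -/
def chg (m1 mh : Fin l → F) (ah : Fin k → F) (i : Fin l) (c : F) :
    P F k l n × (Fin n → F) ≃ Ω F k l n where
  toFun := fun ρ =>
    (ρ.1.1, ρ.1.2.1 + rowMat i (c⁻¹ • ρ.2), ρ.1.2.2 - (m1 i * c⁻¹) • ρ.2,
      ρ.2 - (ah ᵥ* ρ.1.1 + mh ᵥ* (ρ.1.2.1 + rowMat i (c⁻¹ • ρ.2)) +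
        (ρ.1.2.2 - (m1 i * c⁻¹) • ρ.2)))
  invFun := fun ω =>
    ((ω.1, ω.2.1 - rowMat i (c⁻¹ • (ah ᵥ* ω.1 + mh ᵥ* ω.2.1 + ω.2.2.1 + ω.2.2.2)),
      ω.2.2.1 + (m1 i * c⁻¹) • (ah ᵥ* ω.1 + mh ᵥ* ω.2.1 + ω.2.2.1 + ω.2.2.2)),
     ah ᵥ* ω.1 + mh ᵥ* ω.2.1 + ω.2.2.1 + ω.2.2.2)
  left_inv := by
    rintro ⟨⟨A, G, b⟩, t⟩
    have ht : ah ᵥ* A + mh ᵥ* (G + rowMat i (c⁻¹ • t)) + (b - (m1 i * c⁻¹) • t) +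
        (t - (ah ᵥ* A + mh ᵥ* (G + rowMat i (c⁻¹ • t)) + (b - (m1 i * c⁻¹) • t))) = t := by
      abel
    simp only [ht, Prod.mk.injEq]
    exact ⟨⟨trivial, by abel, by abel⟩, trivial⟩
  right_inv := by
    rintro ⟨A, G, b1, b2⟩
    have hG : G - rowMat i (c⁻¹ • (ah ᵥ* A + mh ᵥ* G + b1 + b2)) +
        rowMat i (c⁻¹ • (ah ᵥ* A + mh ᵥ* G + b1 + b2)) = G := by abel
    simp only [Prod.mk.injEq]
    refine ⟨trivial, hG, by abel, ?_⟩
    rw [hG]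
    abel

lemma chg_Y (m1 mh : Fin l → F) (ah : Fin k → F) (i : Fin l) (c : F)
    (x : P F k l n × (Fin n → F)) :
    ah ᵥ* (chg m1 mh ah i c x).1 + mh ᵥ* (chg m1 mh ah i c x).2.1 +
      ((chg m1 mh ah i c x).2.2.1 + (chg m1 mh ah i c x).2.2.2) = x.2 := by
  obtain ⟨⟨A, G, b⟩, t⟩ := x
  simp only [chg, Equiv.coe_fn_mk]
  abel

lemma chg_X1 (m1 mh : Fin l → F) (ah : Fin k → F) (i : Fin l) (c : F)
    (x : P F k l n × (Fin n → F)) :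
    (fun a : Fin k → F => a ᵥ* (chg m1 mh ah i c x).1 + m1 ᵥ* (chg m1 mh ah i c x).2.1 +
      (chg m1 mh ah i c x).2.2.1) =
    fun a : Fin k → F => a ᵥ* x.1.1 + m1 ᵥ* x.1.2.1 + x.1.2.2 := by
  obtain ⟨⟨A, G, b⟩, t⟩ := x
  funext a
  simp only [chg, Equiv.coe_fn_mk, Matrix.vecMul_add, vecMul_rowMat]
  match_scalars <;> field_simp <;> ring

lemma chg_X2 (m1 m2 mh : Fin l → F) (ah : Fin k → F) (i : Fin l) (c : F)
    (hceq : mh i - m1 i - m2 i = c) (hc0 : c ≠ 0)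
    (x : P F k l n × (Fin n → F)) :
    (fun a : Fin k → F => a ᵥ* (chg m1 mh ah i c x).1 + m2 ᵥ* (chg m1 mh ah i c x).2.1 +
      (chg m1 mh ah i c x).2.2.2) =
    fun a : Fin k → F =>
      a ᵥ* x.1.1 + m2 ᵥ* x.1.2.1 - ah ᵥ* x.1.1 - mh ᵥ* x.1.2.1 - x.1.2.2 := by
  obtain ⟨⟨A, G, b⟩, t⟩ := x
  funext a
  simp only [chg, Equiv.coe_fn_mk, Matrix.vecMul_add, vecMul_rowMat]
  match_scalars
  all_goals first
    | ring1
    | (field_simp; linear_combination hceq)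
    | (field_simp; linear_combination -hceq)
    | (field_simp; linear_combination c*hceq)
    | (field_simp; linear_combination -c*hceq)

lemma unif_apply (S : Set (Ω F k l n)) :
    μunif F k l n S =
      ∑ ω : Ω F k l n, S.indicator (fun _ => (Fintype.card (Ω F k l n) : ℝ≥0∞)⁻¹) ω := by
  rw [μunif, PMF.toMeasure_apply (hs := MeasurableSpace.measurableSet_top), tsum_fintype]
  refine Finset.sum_congr rfl fun ω _ => ?_
  by_cases h : ω ∈ S <;> simp [h, PMF.uniformOfFintype_apply]

lemma sum_prod_ite {α β : Type} [Fintype α] [Fintype β]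
    (A : α → Prop) [DecidablePred A] (B : β → Prop) [DecidablePred B] (D : ℝ≥0∞) :
    ∑ x : α × β, (if A x.1 ∧ B x.2 then D else 0) =
      (∑ a : α, if A a then (1 : ℝ≥0∞) else 0) *
        ((∑ b : β, if B b then (1 : ℝ≥0∞) else 0) * D) := by
  rw [Fintype.sum_prod_type]
  have h : ∀ a : α, ∑ b : β, (if A a ∧ B b then D else 0) =
      (if A a then (1 : ℝ≥0∞) else 0) * ∑ b : β, ((if B b then (1 : ℝ≥0∞) else 0) * D) := by
    intro a
    rw [Finset.mul_sum]
    refine Finset.sum_congr rfl fun b _ => ?_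
    by_cases h1 : A a <;> by_cases h2 : B b <;> simp [h1, h2]
  simp_rw [h]
  rw [← Finset.sum_mul, ← Finset.sum_mul]

lemma sum_prod_ite_left {α β : Type} [Fintype α] [Fintype β]
    (A : α → Prop) [DecidablePred A] (D : ℝ≥0∞) :
    ∑ x : α × β, (if A x.1 then D else 0) =
      (∑ a : α, if A a then (1 : ℝ≥0∞) else 0) * ((Fintype.card β : ℝ≥0∞) * D) := by
  have h := sum_prod_ite (α := α) (β := β) A (fun _ => True) D
  simpa using h

lemma sum_prod_ite_right {α β : Type} [Fintype α] [Fintype β]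
    (B : β → Prop) [DecidablePred B] (D : ℝ≥0∞) :
    ∑ x : α × β, (if B x.2 then D else 0) =
      (Fintype.card α : ℝ≥0∞) * ((∑ b : β, if B b then (1 : ℝ≥0∞) else 0) * D) := by
  have h := sum_prod_ite (α := α) (β := β) (fun _ => True) B D
  simpa using h


/-- Lemma 3: the pair of cosets `(C₁(m₁), C₂(m₂))` (each the ordered
`q^k`-tuple of codewords `a ↦ a G_I + m_j G_{O/I} + B_j`) is statistically independent
of the codeword `V(â, m̂) = â G_I + m̂ G_{O/I} + B₁ + B₂` whenever `m̂ ≠ m₁ + m₂`. -/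
theorem stmt_5 (m1 m2 mh : Fin l → F) (ah : Fin k → F) (hne : mh ≠ m1 + m2) :
    IndepFun
      (fun ω : Ω F k l n =>
        ((fun a : Fin k → F => a ᵥ* ω.1 + m1 ᵥ* ω.2.1 + ω.2.2.1),
         (fun a : Fin k → F => a ᵥ* ω.1 + m2 ᵥ* ω.2.1 + ω.2.2.2)))
      (fun ω : Ω F k l n => ah ᵥ* ω.1 + mh ᵥ* ω.2.1 + (ω.2.2.1 + ω.2.2.2))
      (μunif F k l n) := by
  classical
  rw [indepFun_iff_measure_inter_preimage_eq_mul]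
  intro s t _ _
  obtain ⟨i, hi⟩ := Function.ne_iff.mp hne
  set c : F := mh i - m1 i - m2 i with hceq
  have hc0 : c ≠ 0 := by
    rw [hceq, sub_sub]
    exact sub_ne_zero.mpr (by simpa using hi)
  set e := chg (F := F) (k := k) (l := l) (n := n) m1 mh ah i c with he
  set X₀ : P F k l n → ((Fin k → F) → (Fin n → F)) × ((Fin k → F) → (Fin n → F)) :=
    fun ρ => ((fun a => a ᵥ* ρ.1 + m1 ᵥ* ρ.2.1 + ρ.2.2),
              (fun a => a ᵥ* ρ.1 + m2 ᵥ* ρ.2.1 - ah ᵥ* ρ.1 - mh ᵥ* ρ.2.1 - ρ.2.2)) with hX₀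
  set D : ℝ≥0∞ := (Fintype.card (Ω F k l n) : ℝ≥0∞)⁻¹ with hD
  have key : ∀ S : Set (Ω F k l n),
      μunif F k l n S = ∑ x : P F k l n × (Fin n → F), (if e x ∈ S then D else 0) := by
    intro S
    rw [unif_apply, ← Equiv.sum_comp e]
    exact Finset.sum_congr rfl fun x _ => by rw [Set.indicator_apply]
  have hmemX : ∀ x : P F k l n × (Fin n → F),
      (e x ∈ (fun ω : Ω F k l n =>
        ((fun a : Fin k → F => a ᵥ* ω.1 + m1 ᵥ* ω.2.1 + ω.2.2.1),
         (fun a : Fin k → F => a ᵥ* ω.1 + m2 ᵥ* ω.2.1 + ω.2.2.2))) ⁻¹' s) ↔ X₀ x.1 ∈ s := by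
    intro x
    rw [Set.mem_preimage]
    simp only [he, hX₀]
    rw [chg_X1 m1 mh ah i c x, chg_X2 m1 m2 mh ah i c hceq.symm hc0 x]
  have hmemY : ∀ x : P F k l n × (Fin n → F),
      (e x ∈ (fun ω : Ω F k l n =>
        ah ᵥ* ω.1 + mh ᵥ* ω.2.1 + (ω.2.2.1 + ω.2.2.2)) ⁻¹' t) ↔ x.2 ∈ t := by
    intro x
    rw [Set.mem_preimage]
    simp only [he]
    rw [chg_Y m1 mh ah i c x]
  set N1 : ℝ≥0∞ := ∑ p : P F k l n, if X₀ p ∈ s then (1 : ℝ≥0∞) else 0 with hN1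
  set N2 : ℝ≥0∞ := ∑ u : Fin n → F, if u ∈ t then (1 : ℝ≥0∞) else 0 with hN2
  set cP : ℝ≥0∞ := (Fintype.card (P F k l n) : ℝ≥0∞) with hcP
  set cV : ℝ≥0∞ := (Fintype.card (Fin n → F) : ℝ≥0∞) with hcV
  have h1 : μunif F k l n
      ((fun ω : Ω F k l n =>
        ((fun a : Fin k → F => a ᵥ* ω.1 + m1 ᵥ* ω.2.1 + ω.2.2.1),
         (fun a : Fin k → F => a ᵥ* ω.1 + m2 ᵥ* ω.2.1 + ω.2.2.2))) ⁻¹' s ∩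
       (fun ω : Ω F k l n => ah ᵥ* ω.1 + mh ᵥ* ω.2.1 + (ω.2.2.1 + ω.2.2.2)) ⁻¹' t) =
      N1 * (N2 * D) := by
    rw [key, hN1, hN2, ← sum_prod_ite (fun p => X₀ p ∈ s) (fun u => u ∈ t) D]
    refine Finset.sum_congr rfl fun x _ => ?_
    have hiff := (Set.mem_inter_iff (e x) _ _).trans (and_congr (hmemX x) (hmemY x))
    simp only [hiff]
  have h2 : μunif F k l n
      ((fun ω : Ω F k l n =>
        ((fun a : Fin k → F => a ᵥ* ω.1 + m1 ᵥ* ω.2.1 + ω.2.2.1),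
         (fun a : Fin k → F => a ᵥ* ω.1 + m2 ᵥ* ω.2.1 + ω.2.2.2))) ⁻¹' s) =
      N1 * (cV * D) := by
    rw [key, hN1, hcV, ← sum_prod_ite_left (β := Fin n → F) (fun p => X₀ p ∈ s) D]
    refine Finset.sum_congr rfl fun x _ => ?_
    simp only [hmemX x]
  have h3 : μunif F k l n
      ((fun ω : Ω F k l n =>
        ah ᵥ* ω.1 + mh ᵥ* ω.2.1 + (ω.2.2.1 + ω.2.2.2)) ⁻¹' t) =
      cP * (N2 * D) := by
    rw [key, hN2, hcP, ← sum_prod_ite_right (α := P F k l n) (fun u => u ∈ t) D]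
    refine Finset.sum_congr rfl fun x _ => ?_
    simp only [hmemY x]
  have hone : cP * (cV * D) = 1 := by
    have hcard : (Fintype.card (Ω F k l n) : ℝ≥0∞) = cP * cV := by
      rw [hcP, hcV, ← Nat.cast_mul]
      congr 1
      simp only [Fintype.card_prod]
      ring
    rw [hD, ← mul_assoc, ← hcard]
    exact ENNReal.mul_inv_cancel (by exact_mod_cast Fintype.card_ne_zero)
      (ENNReal.natCast_ne_top _)
  rw [h1, h2, h3]
  calc N1 * (N2 * D) = N1 * (N2 * D) * (cP * (cV * D)) := by rw [hone, mul_one]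
    _ = N1 * (cV * D) * (cP * (N2 * D)) := by ring

end Stmt5
end
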